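/- Let N_d ≥ 2 be an integer, let N_p = N_d − 1, and let i be a real number with cos i < N_p/N_d. Then the relative trajectory p in a prograde rotating frame is not injective on [0,1); i.e., the relative trajectory self-intersects. -/

import Mathlib

open Real

set_option maxHeartbeats 1000000

/-- The relative trajectory in a prograde rotating frame: ascending node longitude
`Θ = -2π N_d τ`, argument of latitude `u = 2π N_p τ`, inclination `i`, unit radius. -/
noncomputable def progradeTrajectory (Nd Np : ℕ) (i : ℝ) (τ : ℝ) : ℝ × ℝ × ℝ :=
  let Θ : ℝ := -(2 * π * Nd * τ)
  let u : ℝ := 2 * π * Np * τ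
  (Real.cos Θ * Real.cos u - Real.sin Θ * Real.sin u * Real.cos i,
   Real.sin Θ * Real.cos u + Real.cos Θ * Real.sin u * Real.cos i,
   Real.sin u * Real.sin i)

/-- Theorem 2, necessity, case `α > 0`, `N_p = N_d - 1`: if `cos i < N_p/N_d`,
the prograde relative trajectory self-intersects. -/
theorem prograde_not_injOn_of_cos_lt (Nd Np : ℕ) (hNd : 2 ≤ Nd) (hNp : Np = Nd - 1)
    (i : ℝ) (hi : Real.cos i < (Np : ℝ) / Nd) :
    ¬ Set.InjOn (progradeTrajectory Nd Np i) (Set.Ico 0 1) := by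
  intro hinj
  have hπ := Real.pi_pos
  set k := Real.cos i with hk
  set n : ℝ := (Nd : ℝ) with hn
  have hn2 : (2:ℝ) ≤ n := by rw [hn]; exact_mod_cast hNd
  have hm : (Np : ℝ) = n - 1 := by
    rw [hNp]; push_cast [Nat.cast_sub (by omega : 1 ≤ Nd)]; ring
  have hm1 : (1:ℝ) ≤ (Np : ℝ) := by rw [hm]; linarith
  have hmpos : (0:ℝ) < (Np : ℝ) := by linarith
  have hnpos : (0:ℝ) < n := by linarith
  -- the function F
  set F : ℝ → ℝ := fun δ =>
    Real.cos (π * n * δ) * Real.sin (π * (Np:ℝ) * δ)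
      - k * (Real.sin (π * n * δ) * Real.cos (π * (Np:ℝ) * δ)) with hF
  have hF0 : F 0 = 0 := by simp [hF]
  -- derivative of F at 0
  have hderiv : HasDerivAt F (π * (Np:ℝ) - k * (π * n)) 0 := by
    have h1 : HasDerivAt (fun δ : ℝ => π * n * δ) (π * n) 0 := by
      simpa using (hasDerivAt_id (0:ℝ)).const_mul (π * n)
    have h2 : HasDerivAt (fun δ : ℝ => π * (Np:ℝ) * δ) (π * (Np:ℝ)) 0 := by
      simpa using (hasDerivAt_id (0:ℝ)).const_mul (π * (Np:ℝ))
    have := ((h1.cos.mul h2.sin).sub ((h1.sin.mul h2.cos).const_mul k))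
    exact this.congr_deriv (by simp)
  have hdpos : 0 < π * (Np:ℝ) - k * (π * n) := by
    have hkn : k * n < (Np:ℝ) := by
      have := (lt_div_iff₀ hnpos).mp hi
      linarith
    nlinarith
  -- find x ∈ Ioo 0 (1/(2n-1)) with F x > 0
  set M : ℝ := 2 * n - 1 with hM
  have hM3 : (3:ℝ) ≤ M := by rw [hM]; linarith
  have hMpos : (0:ℝ) < M := by linarith
  have hslope : Filter.Tendsto (slope F 0) (nhdsWithin 0 {(0:ℝ)}ᶜ) (nhds (π * (Np:ℝ) - k * (π * n))) :=
    hasDerivAt_iff_tendsto_slope.mp hderiv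
  have hev : ∀ᶠ x in nhdsWithin 0 {(0:ℝ)}ᶜ, 0 < slope F 0 x :=
    hslope.eventually (lt_mem_nhds hdpos)
  have hle : nhdsWithin (0:ℝ) (Set.Ioi 0) ≤ nhdsWithin 0 {(0:ℝ)}ᶜ :=
    nhdsWithin_mono _ (fun x hx => ne_of_gt hx)
  have hIoo : Set.Ioo (0:ℝ) (1/M) ∈ nhdsWithin (0:ℝ) (Set.Ioi 0) :=
    Ioo_mem_nhdsGT (by positivity)
  obtain ⟨x, hx1, hx2⟩ := ((hev.filter_mono hle).and (Filter.eventually_of_mem hIoo (fun y hy => hy))).exists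
  have hFx : 0 < F x := by
    have hxpos : 0 < x := hx2.1
    have hsl : slope F 0 x = F x / x := by
      rw [slope_def_field, hF0]; ring_nf
    rw [hsl] at hx1
    by_contra h
    push_neg at h
    nlinarith [div_nonpos_of_nonpos_of_nonneg h hxpos.le]
  -- F (1/M) ≤ 0
  have hA : π * (Np:ℝ) * (1/M) = π - π * n * (1/M) := by
    field_simp
    rw [hm, hM]; ring
  have hFM : F (1/M) ≤ 0 := by
    have hFM' : F (1/M) = Real.cos (π*n*(1/M)) * Real.sin (π*(Np:ℝ)*(1/M))
        - k*(Real.sin (π*n*(1/M)) * Real.cos (π*(Np:ℝ)*(1/M))) := rfl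
    rw [hFM', hA, Real.sin_pi_sub, Real.cos_pi_sub]
    have hApos : 0 < π * n * (1/M) := by positivity
    have hAlt : π * n * (1/M) < π := by
      rw [mul_one_div, div_lt_iff₀ hMpos]; nlinarith
    have hAgt : π/2 < π * n * (1/M) := by
      rw [mul_one_div, lt_div_iff₀ hMpos]; nlinarith
    have hs : 0 < Real.sin (π * n * (1/M)) := Real.sin_pos_of_pos_of_lt_pi hApos hAlt
    have hc : Real.cos (π * n * (1/M)) < 0 :=
      Real.cos_neg_of_pi_div_two_lt_of_lt hAgt (by linarith)
    have hk1 : -1 ≤ k := Real.neg_one_le_cos i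
    nlinarith [mul_nonpos_of_nonneg_of_nonpos (mul_nonneg (by linarith : (0:ℝ) ≤ 1+k) hs.le) hc.le]
  -- IVT
  have hcont : ContinuousOn F (Set.Icc x (1/M)) := by
    apply Continuous.continuousOn
    fun_prop
  have hsub := intermediate_value_Icc' hx2.2.le hcont
  have h0mem : (0:ℝ) ∈ Set.Icc (F (1/M)) (F x) := ⟨hFM, hFx.le⟩
  obtain ⟨δ, hδmem, hFδ⟩ := hsub h0mem
  have hδpos : 0 < δ := lt_of_lt_of_le hx2.1 hδmem.1
  have hδle : δ ≤ 1/M := hδmem.2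
  -- the two colliding parameters
  set τ₁ : ℝ := 1/(4*(Np:ℝ)) - δ/2 with hτ₁
  set τ₂ : ℝ := τ₁ + δ with hτ₂
  have hδM : δ * (2*n - 1) ≤ 1 := by
    have h := hδle
    rw [hM] at h
    exact (le_div_iff₀ (by linarith)).mp h
  have hτ₁pos : 0 < τ₁ := by
    rw [hτ₁, hm, sub_pos]
    rw [div_lt_div_iff₀ (by norm_num : (0:ℝ) < 2) (by linarith : (0:ℝ) < 4*(n-1))]
    nlinarith
  have hτ₂lt : τ₂ < 1 := by
    rw [hτ₂, hτ₁, hm]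
    have h3 : 1/(4*(n-1)) ≤ 1/4 :=
      one_div_le_one_div_of_le (by norm_num) (by linarith)
    have h4 : δ ≤ 1/3 := by
      have h := hδle
      rw [hM] at h
      exact h.trans (one_div_le_one_div_of_le (by norm_num) (by linarith))
    linarith
  have hτ₁mem : τ₁ ∈ Set.Ico (0:ℝ) 1 := ⟨hτ₁pos.le, by linarith⟩
  have hτ₂mem : τ₂ ∈ Set.Ico (0:ℝ) 1 := ⟨by rw [hτ₂]; linarith, hτ₂lt⟩
  have hne : τ₁ ≠ τ₂ := by rw [hτ₂]; intro h; linarith [congrArg id h]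
  -- the trajectory values coincide
  set a : ℝ := π * (Np:ℝ) * δ with ha
  set b : ℝ := π * n * δ with hb
  set φ : ℝ := π * n / (2*(Np:ℝ)) with hφ
  have hFδ' : Real.cos b * Real.sin a - k * (Real.sin b * Real.cos a) = 0 := hFδ
  have hNp0 : (Np:ℝ) ≠ 0 := ne_of_gt hmpos
  have e1 : -(2*π*(Nd:ℝ)*τ₁) = b - φ := by
    rw [hτ₁, hb, hφ, ← hn]; field_simp; ring
  have e2 : 2*π*(Np:ℝ)*τ₁ = π/2 - a := by
    rw [hτ₁, ha]; field_simp; ring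
  have e3 : -(2*π*(Nd:ℝ)*τ₂) = -b - φ := by
    rw [hτ₂, hτ₁, hb, hφ, ← hn]; field_simp; ring
  have e4 : 2*π*(Np:ℝ)*τ₂ = π/2 + a := by
    rw [hτ₂, hτ₁, ha]; field_simp; ring
  have key : progradeTrajectory Nd Np i τ₁ = progradeTrajectory Nd Np i τ₂ := by
    show (Real.cos (-(2*π*(Nd:ℝ)*τ₁)) * Real.cos (2*π*(Np:ℝ)*τ₁) - Real.sin (-(2*π*(Nd:ℝ)*τ₁)) * Real.sin (2*π*(Np:ℝ)*τ₁) * Real.cos i,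
          Real.sin (-(2*π*(Nd:ℝ)*τ₁)) * Real.cos (2*π*(Np:ℝ)*τ₁) + Real.cos (-(2*π*(Nd:ℝ)*τ₁)) * Real.sin (2*π*(Np:ℝ)*τ₁) * Real.cos i,
          Real.sin (2*π*(Np:ℝ)*τ₁) * Real.sin i)
        = (Real.cos (-(2*π*(Nd:ℝ)*τ₂)) * Real.cos (2*π*(Np:ℝ)*τ₂) - Real.sin (-(2*π*(Nd:ℝ)*τ₂)) * Real.sin (2*π*(Np:ℝ)*τ₂) * Real.cos i,
          Real.sin (-(2*π*(Nd:ℝ)*τ₂)) * Real.cos (2*π*(Np:ℝ)*τ₂) + Real.cos (-(2*π*(Nd:ℝ)*τ₂)) * Real.sin (2*π*(Np:ℝ)*τ₂) * Real.cos i,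
          Real.sin (2*π*(Np:ℝ)*τ₂) * Real.sin i)
    rw [e1, e2, e3, e4, ← hk]
    simp only [Real.cos_sub, Real.sin_sub, Real.cos_add, Real.sin_add,
      Real.cos_pi_div_two, Real.sin_pi_div_two, Real.cos_neg, Real.sin_neg, Prod.mk.injEq]
    refine ⟨?_, ?_, ?_⟩
    · linear_combination (2 * Real.cos φ) * hFδ'
    · linear_combination (-2 * Real.sin φ) * hFδ'
    · ring
  exact hne (hinj hτ₁mem hτ₂mem key)
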